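/- Let q be a positive integer, σ real, 0 < κ < 1/2, and set χ₁(q,q) = κ + sin(4πqκ)/(4πq) − sin(2πqκ)/(πq) and χ₂(q,q) = κ − sin(4πqκ)/(4πq). Then the functions φ±(x) = cos(2πqx) ± i·sin(2πqx) are eigenfunctions of the operator (Lφ)(x) = p∫_{x-κ}^{x+κ} cos(2πq(y−x)+σ)φ(y)dy − (p cos σ sin(2πqκ)/(πq))φ(x) with eigenvalues λ± = p·χ₁(q,q)·cos σ ∓ i·p·χ₂(q,q)·sin σ. -/

import Mathlib

open Real Set intervalIntegral Complex

set_option maxHeartbeats 2000000 in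
lemma key_eig (p κ σ a : ℝ) (ha : a ≠ 0) (ι : ℂ) (hι0 : ι ≠ 0)
    (hE : ∀ t : ℝ, Complex.exp ((t : ℂ) * ι) = (Real.cos t : ℂ) + ι * (Real.sin t : ℂ))
    (x : ℝ) :
    (p : ℂ) * (∫ y in (x - κ)..(x + κ),
        (Real.cos (a * (y - x) + σ) : ℂ)
          * ((Real.cos (a * y) : ℂ) + ι * (Real.sin (a * y) : ℂ)))
      - ((p * Real.cos σ * (2 * Real.sin (a * κ) / a) : ℝ) : ℂ)
        * ((Real.cos (a * x) : ℂ) + ι * (Real.sin (a * x) : ℂ))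
    = (((p * (κ + Real.sin (2 * a * κ) / (2 * a) - 2 * Real.sin (a * κ) / a)
          * Real.cos σ : ℝ) : ℂ)
        - ι * ((p * (κ - Real.sin (2 * a * κ) / (2 * a)) * Real.sin σ : ℝ) : ℂ))
      * ((Real.cos (a * x) : ℂ) + ι * (Real.sin (a * x) : ℂ)) := by
  have hEneg : ∀ t : ℝ, Complex.exp (-((t : ℂ) * ι))
      = (Real.cos t : ℂ) - ι * (Real.sin t : ℂ) := by
    intro t
    have h := hE (-t)
    rw [Complex.ofReal_neg, Real.cos_neg, Real.sin_neg, Complex.ofReal_neg] at h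
    rw [show -((t : ℂ) * ι) = (-(t : ℂ)) * ι by ring, h]
    ring
  have hcosF : ∀ t : ℝ, (Real.cos t : ℂ)
      = (Complex.exp ((t : ℂ) * ι) + (Complex.exp ((t : ℂ) * ι))⁻¹) / 2 := by
    intro t
    rw [← Complex.exp_neg, hE, hEneg]
    ring
  have hsinF : ∀ t : ℝ, (Real.sin t : ℂ)
      = (Complex.exp ((t : ℂ) * ι) - (Complex.exp ((t : ℂ) * ι))⁻¹) / (2 * ι) := by
    intro t
    rw [← Complex.exp_neg, hE, hEneg]
    field_simp
    ring
  set C₁ : ℂ := Complex.exp ((σ : ℂ) * ι) * (Complex.exp (((a * x : ℝ) : ℂ) * ι))⁻¹ / 2 with hC₁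
  set C₂ : ℂ := Complex.exp (((a * x : ℝ) : ℂ) * ι) * (Complex.exp ((σ : ℂ) * ι))⁻¹ / 2 with hC₂
  have hg : ∀ y : ℝ,
      (Real.cos (a * (y - x) + σ) : ℂ)
          * ((Real.cos (a * y) : ℂ) + ι * (Real.sin (a * y) : ℂ))
        = C₁ * Complex.exp ((2 * a * ι) * (y : ℂ)) + C₂ := by
    intro y
    have k1 : Complex.exp (((a * (y - x) + σ : ℝ) : ℂ) * ι)
        = Complex.exp ((σ : ℂ) * ι) * (Complex.exp (((a * x : ℝ) : ℂ) * ι))⁻¹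
            * Complex.exp (((a * y : ℝ) : ℂ) * ι) := by
      rw [← Complex.exp_neg, ← Complex.exp_add, ← Complex.exp_add]
      congr 1
      push_cast
      ring
    have k1' : Complex.exp (-(((a * (y - x) + σ : ℝ) : ℂ) * ι))
        = (Complex.exp ((σ : ℂ) * ι))⁻¹ * Complex.exp (((a * x : ℝ) : ℂ) * ι)
            * (Complex.exp (((a * y : ℝ) : ℂ) * ι))⁻¹ := by
      rw [← Complex.exp_neg, ← Complex.exp_neg, ← Complex.exp_add, ← Complex.exp_add]
      congr 1
      push_cast
      ring
    have k2 : Complex.exp ((2 * a * ι) * (y : ℂ))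
        = Complex.exp (((a * y : ℝ) : ℂ) * ι) * Complex.exp (((a * y : ℝ) : ℂ) * ι) := by
      rw [← Complex.exp_add]
      congr 1
      push_cast
      ring
    rw [hcosF (a * (y - x) + σ), ← Complex.exp_neg, ← hE (a * y), k1, k1', k2, hC₁, hC₂]
    field_simp
  set F : ℝ → ℂ := fun y => C₁ * Complex.exp ((2 * a * ι) * (y : ℂ)) / (2 * a * ι) + C₂ * (y : ℂ)
    with hF
  have hane : (2 * (a : ℂ) * ι) ≠ 0 :=
    mul_ne_zero (mul_ne_zero two_ne_zero (Complex.ofReal_ne_zero.mpr ha)) hι0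
  have hder : ∀ y ∈ Set.uIcc (x - κ) (x + κ),
      HasDerivAt F (C₁ * Complex.exp ((2 * a * ι) * (y : ℂ)) + C₂) y := by
    intro y _
    have h1 : HasDerivAt (fun y : ℝ => Complex.exp ((2 * a * ι) * (y : ℂ)))
        ((2 * a * ι) * Complex.exp ((2 * a * ι) * (y : ℂ))) y := by
      have hlin : HasDerivAt (fun z : ℂ => (2 * (a : ℂ) * ι) * z) (2 * (a : ℂ) * ι)
          ((y : ℝ) : ℂ) := by
        simpa using (hasDerivAt_id ((y : ℝ) : ℂ)).const_mul ((2 : ℂ) * a * ι)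
      have hc := hlin.cexp
      have hc' : HasDerivAt (fun z : ℂ => Complex.exp ((2 * a * ι) * z))
          ((2 * a * ι) * Complex.exp ((2 * a * ι) * ((y : ℝ) : ℂ))) ((y : ℝ) : ℂ) := by
        rwa [mul_comm (Complex.exp _)] at hc
      exact hc'.comp_ofReal
    have h2 : HasDerivAt (fun y : ℝ => C₂ * (y : ℂ)) C₂ y := by
      simpa using (Complex.ofRealCLM.hasDerivAt (x := y)).const_mul C₂
    have h3 := ((h1.const_mul C₁).div_const (2 * a * ι)).add h2
    have hval : C₁ * ((2 * (a : ℂ) * ι) * Complex.exp ((2 * a * ι) * (y : ℂ))) / (2 * a * ι) + C₂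
        = C₁ * Complex.exp ((2 * a * ι) * (y : ℂ)) + C₂ := by
      field_simp [Complex.ofReal_ne_zero.mpr ha]
    rwa [hval] at h3
  have hcont : Continuous (fun y : ℝ => (Real.cos (a * (y - x) + σ) : ℂ)
      * ((Real.cos (a * y) : ℂ) + ι * (Real.sin (a * y) : ℂ))) := by
    fun_prop
  have hint : (∫ y in (x - κ)..(x + κ), (Real.cos (a * (y - x) + σ) : ℂ)
        * ((Real.cos (a * y) : ℂ) + ι * (Real.sin (a * y) : ℂ)))
      = F (x + κ) - F (x - κ) := by
    apply intervalIntegral.integral_eq_sub_of_hasDerivAt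
    · intro y hy
      rw [hg y]
      exact hder y hy
    · exact hcont.intervalIntegrable _ _
  have m1 : Complex.exp ((2 * a * ι) * (((x + κ : ℝ)) : ℂ))
      = Complex.exp (((a * x : ℝ) : ℂ) * ι) * Complex.exp (((a * x : ℝ) : ℂ) * ι)
        * (Complex.exp (((a * κ : ℝ) : ℂ) * ι) * Complex.exp (((a * κ : ℝ) : ℂ) * ι)) := by
    rw [← Complex.exp_add, ← Complex.exp_add, ← Complex.exp_add]
    congr 1
    push_cast
    ring
  have m2 : Complex.exp ((2 * a * ι) * (((x - κ : ℝ)) : ℂ))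
      = Complex.exp (((a * x : ℝ) : ℂ) * ι) * Complex.exp (((a * x : ℝ) : ℂ) * ι)
        * ((Complex.exp (((a * κ : ℝ) : ℂ) * ι))⁻¹ * (Complex.exp (((a * κ : ℝ) : ℂ) * ι))⁻¹) := by
    rw [← Complex.exp_neg, ← Complex.exp_add, ← Complex.exp_add, ← Complex.exp_add]
    congr 1
    push_cast
    ring
  have m3 : Complex.exp (((2 * a * κ : ℝ) : ℂ) * ι)
      = Complex.exp (((a * κ : ℝ) : ℂ) * ι) * Complex.exp (((a * κ : ℝ) : ℂ) * ι) := by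
    rw [← Complex.exp_add]
    congr 1
    push_cast
    ring
  have hI2 : F (x + κ) - F (x - κ)
      = ((κ : ℂ) * Complex.exp (-((σ : ℂ) * ι))
          + (Real.sin (2 * a * κ) : ℂ) / (2 * (a : ℂ)) * Complex.exp ((σ : ℂ) * ι))
        * Complex.exp (((a * x : ℝ) : ℂ) * ι) := by
    simp only [hF]
    rw [m1, m2, hC₁, hC₂, hsinF (2 * a * κ), m3, Complex.exp_neg]
    set u := Complex.exp ((σ : ℂ) * ι) with hu
    set v := Complex.exp (((a * x : ℝ) : ℂ) * ι) with hv
    set w := Complex.exp (((a * κ : ℝ) : ℂ) * ι) with hw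
    clear_value u v w
    have hu0 : u ≠ 0 := by rw [hu]; exact Complex.exp_ne_zero _
    have hv0 : v ≠ 0 := by rw [hv]; exact Complex.exp_ne_zero _
    have hw0 : w ≠ 0 := by rw [hw]; exact Complex.exp_ne_zero _
    have haC : (a : ℂ) ≠ 0 := Complex.ofReal_ne_zero.mpr ha
    field_simp
    push_cast
    ring
  rw [hint, hI2, ← hE (a * x), hE σ, hEneg σ]
  simp only [Complex.ofReal_mul, Complex.ofReal_div, Complex.ofReal_add, Complex.ofReal_sub,
    Complex.ofReal_ofNat]
  have haC : (a : ℂ) ≠ 0 := Complex.ofReal_ne_zero.mpr ha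
  field_simp
  ring

theorem twisted_eigenfunctions
    (p κ σ : ℝ) (hp : 0 < p) (hκ : 0 < κ) (hκ' : κ < 1/2)
    (q : ℕ) (hq : 1 ≤ q)
    (χ₁ χ₂ : ℝ)
    (hχ₁ : χ₁ = κ + Real.sin (4*π*q*κ) / (4*π*q) - Real.sin (2*π*q*κ) / (π*q))
    (hχ₂ : χ₂ = κ - Real.sin (4*π*q*κ) / (4*π*q))
    (L : (ℝ → ℂ) → (ℝ → ℂ))
    (hL : ∀ φ : ℝ → ℂ, ∀ x : ℝ,
      L φ x = (p:ℂ) * (∫ y in (x-κ)..(x+κ), (Real.cos (2*π*q*(y-x) + σ) : ℂ) * φ y)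
              - ((p * Real.cos σ * Real.sin (2*π*q*κ) / (π*q) : ℝ) : ℂ) * φ x)
    (φp φm : ℝ → ℂ)
    (hφp : ∀ x, φp x = (Real.cos (2*π*q*x) : ℂ) + Complex.I * (Real.sin (2*π*q*x) : ℂ))
    (hφm : ∀ x, φm x = (Real.cos (2*π*q*x) : ℂ) - Complex.I * (Real.sin (2*π*q*x) : ℂ)) :
    (∀ x : ℝ, L φp x
        = ((p * χ₁ * Real.cos σ : ℝ) - Complex.I * (p * χ₂ * Real.sin σ : ℝ)) * φp x)
    ∧ (∀ x : ℝ, L φm x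
        = ((p * χ₁ * Real.cos σ : ℝ) + Complex.I * (p * χ₂ * Real.sin σ : ℝ)) * φm x) := by
  have hq0 : (q : ℝ) ≠ 0 := Nat.cast_ne_zero.mpr (by omega)
  have hπ : (π : ℝ) ≠ 0 := Real.pi_ne_zero
  have ha : (2 * π * (q : ℝ)) ≠ 0 := mul_ne_zero (mul_ne_zero two_ne_zero hπ) hq0
  have hπC : ((π : ℝ) : ℂ) ≠ 0 := Complex.ofReal_ne_zero.mpr hπ
  have hqC : ((q : ℕ) : ℂ) ≠ 0 := Nat.cast_ne_zero.mpr (by omega)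
  have h4 : (2 : ℝ) * (2 * π * (q : ℝ)) = 4 * π * (q : ℝ) := by ring
  have hcoef : p * Real.cos σ * Real.sin (2 * π * (q : ℝ) * κ) / (π * (q : ℝ))
      = p * Real.cos σ * (2 * Real.sin (2 * π * (q : ℝ) * κ) / (2 * π * (q : ℝ))) := by
    field_simp
  have e1 : p * (κ + Real.sin (4*π*(q:ℝ)*κ) / (4*π*(q:ℝ))
        - 2 * Real.sin (2*π*(q:ℝ)*κ) / (2*π*(q:ℝ))) * Real.cos σ
      = p * χ₁ * Real.cos σ := by
    rw [hχ₁]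
    field_simp
  have e2 : p * (κ - Real.sin (4*π*(q:ℝ)*κ) / (4*π*(q:ℝ))) * Real.sin σ
      = p * χ₂ * Real.sin σ := by
    rw [hχ₂]
  constructor
  · intro x
    have hEI : ∀ t : ℝ, Complex.exp ((t : ℂ) * I)
        = (Real.cos t : ℂ) + I * (Real.sin t : ℂ) := by
      intro t
      rw [Complex.exp_mul_I, ← Complex.ofReal_cos, ← Complex.ofReal_sin]
      ring
    have hk := key_eig p κ σ (2 * π * (q : ℝ)) ha I Complex.I_ne_zero hEI x
    rw [h4] at hk
    rw [hL]
    simp only [hφp]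
    rw [hcoef, hk, e1, e2]
  · intro x
    have hEm : ∀ t : ℝ, Complex.exp ((t : ℂ) * (-I))
        = (Real.cos t : ℂ) + (-I) * (Real.sin t : ℂ) := by
      intro t
      rw [show (t : ℂ) * (-I) = ((-t : ℝ) : ℂ) * I by push_cast; ring, Complex.exp_mul_I,
        ← Complex.ofReal_cos, ← Complex.ofReal_sin, Real.cos_neg, Real.sin_neg,
        Complex.ofReal_neg]
      ring
    have hk := key_eig p κ σ (2 * π * (q : ℝ)) ha (-I)
      (neg_ne_zero.mpr Complex.I_ne_zero) hEm x
    rw [h4] at hk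
    rw [hL]
    simp only [hφm, show ∀ c s : ℂ, c - I * s = c + (-I) * s from fun c s => by ring]
    rw [hcoef, hk, e1, e2]
    ring
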